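/- Let S, T ∈ B_A(H) and q a nonzero complex number with |q| ≤ 1. Then |q|²·w_{q,A}(TS) ≤ 4·w_{q,A}(T)·w_{q,A}(S). -/

import Mathlib

open scoped InnerProductSpace
open ComplexConjugate

variable {H : Type*} [NormedAddCommGroup H] [InnerProductSpace ℂ H] [CompleteSpace H]

/-- The semi-inner product induced by `A`: `⟨x,y⟩_A = ⟨Ax,y⟩`
(linear in the first argument, as in the paper). -/
noncomputable def sip (A : H →L[ℂ] H) (x y : H) : ℂ := @inner ℂ H _ y (A x)

/-- The seminorm induced by `A`. -/
noncomputable def normA (A : H →L[ℂ] H) (x : H) : ℝ := Real.sqrt (sip A x x).re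

/-- The `A`-`q`-numerical radius of `T`. -/
noncomputable def wqA (A T : H →L[ℂ] H) (q : ℂ) : ℝ :=
  sSup {r : ℝ | ∃ x y : H, normA A x = 1 ∧ normA A y = 1 ∧ sip A x y = q ∧
    r = ‖sip A (T x) y‖}

/-- The `A`-operator seminorm of `T`. -/
noncomputable def opNormA (A T : H →L[ℂ] H) : ℝ :=
  sSup {r : ℝ | ∃ x ∈ closure (Set.range fun v => A v), x ≠ 0 ∧ r = normA A (T x) / normA A x}

section aux

set_option linter.unusedSectionVars false

variable (A B : H →L[ℂ] H)

lemma sipB (hBB : ∀ x, B (B x) = A x) (hsym : ∀ x y, ⟪B x, y⟫_ℂ = ⟪x, B y⟫_ℂ)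
    (x y : H) : sip A x y = ⟪B y, B x⟫_ℂ := by
  rw [sip, ← hBB, hsym]

lemma normAB (hBB : ∀ x, B (B x) = A x) (hsym : ∀ x y, ⟪B x, y⟫_ℂ = ⟪x, B y⟫_ℂ)
    (x : H) : normA A x = ‖B x‖ := by
  rw [normA, sipB A B hBB hsym, inner_self_eq_norm_sq_to_K (𝕜 := ℂ)]
  norm_cast
  exact Real.sqrt_sq (norm_nonneg _)

lemma sip_cs (hBB : ∀ x, B (B x) = A x) (hsym : ∀ x y, ⟪B x, y⟫_ℂ = ⟪x, B y⟫_ℂ)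
    (x y : H) : ‖sip A x y‖ ≤ ‖B x‖ * ‖B y‖ := by
  rw [sipB A B hBB hsym]
  exact (norm_inner_le_norm _ _).trans_eq (mul_comm _ _)

end aux


section aux2

set_option linter.unusedSectionVars false

variable (A B : H →L[ℂ] H)

lemma sip_conj (hBB : ∀ x, B (B x) = A x) (hsym : ∀ x y, ⟪B x, y⟫_ℂ = ⟪x, B y⟫_ℂ)
    (x y : H) : sip A x y = conj (sip A y x) := by
  rw [sipB A B hBB hsym, sipB A B hBB hsym, inner_conj_symm]

lemma normBsq (hBB : ∀ x, B (B x) = A x) (hsym : ∀ x y, ⟪B x, y⟫_ℂ = ⟪x, B y⟫_ℂ)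
    (x : H) : ‖B x‖ ^ 2 = (sip A x x).re := by
  rw [sipB A B hBB hsym, inner_self_eq_norm_sq_to_K (𝕜 := ℂ)]
  norm_cast

/-- adjointable implies A-bounded -/
lemma opbound (hBB : ∀ x, B (B x) = A x) (hsym : ∀ x y, ⟪B x, y⟫_ℂ = ⟪x, B y⟫_ℂ)
    (T W : H →L[ℂ] H) (hadj : ∀ x y : H, sip A (T x) y = sip A x (W y)) :
    ∃ C : ℝ, 0 ≤ C ∧ ∀ x, ‖B (T x)‖ ≤ C * ‖B x‖ := by
  set R := W ∘L T with hRdef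
  have hW : ∀ u v, sip A (W u) v = sip A u (T v) := by
    intro u v
    rw [sip_conj A B hBB hsym, ← hadj, ← sip_conj A B hBB hsym]
  have hR : ∀ x y, sip A (R x) y = sip A x (R y) := by
    intro x y
    have h1 : R x = W (T x) := rfl
    rw [h1, hW, hadj]; rfl
  have hRn : ∀ (n : ℕ) (x y : H), sip A ((R ^ n) x) y = sip A x ((R ^ n) y) := by
    intro n
    induction n with
    | zero => intro x y; simp
    | succ n ih =>
      intro x y
      have h1 : (R ^ (n+1)) x = (R ^ n) (R x) := by
        rw [pow_succ]; rfl
      have h2 : (R ^ (n+1)) y = R ((R ^ n) y) := by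
        rw [pow_succ']; rfl
      rw [h1, h2, ih, hR]
  have key1 : ∀ (m : ℕ) (x : H),
      ‖B ((R ^ m) x)‖ ^ 2 ≤ ‖B x‖ * ‖B ((R ^ (2 * m)) x)‖ := by
    intro m x
    have e1 : sip A ((R ^ m) x) ((R ^ m) x) = sip A x ((R ^ (2 * m)) x) := by
      rw [hRn m x ((R ^ m) x)]
      congr 1
      rw [two_mul, pow_add]; rfl
    calc ‖B ((R ^ m) x)‖ ^ 2 = (sip A ((R ^ m) x) ((R ^ m) x)).re :=
          normBsq A B hBB hsym _
      _ ≤ ‖sip A ((R ^ m) x) ((R ^ m) x)‖ := Complex.re_le_norm _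
      _ = ‖sip A x ((R ^ (2 * m)) x)‖ := by rw [e1]
      _ ≤ ‖B x‖ * ‖B ((R ^ (2 * m)) x)‖ := sip_cs A B hBB hsym _ _
  have keyn : ∀ (n : ℕ) (x : H),
      ‖B (R x)‖ ^ (2 ^ n) ≤ ‖B x‖ ^ (2 ^ n - 1) * ‖B ((R ^ (2 ^ n)) x)‖ := by
    intro n x
    induction n with
    | zero => simpa using le_refl (‖B (R x)‖)
    | succ n ih =>
      have h1 : ‖B (R x)‖ ^ (2 ^ (n+1)) = (‖B (R x)‖ ^ (2 ^ n)) ^ 2 := by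
        rw [← pow_mul, pow_succ]
      have h2 : (‖B (R x)‖ ^ (2 ^ n)) ^ 2 ≤ (‖B x‖ ^ (2 ^ n - 1) * ‖B ((R ^ (2 ^ n)) x)‖) ^ 2 :=
        pow_le_pow_left₀ (pow_nonneg (norm_nonneg _) _) ih 2
      have h3 : ‖B ((R ^ (2 ^ n)) x)‖ ^ 2 ≤ ‖B x‖ * ‖B ((R ^ (2 ^ (n+1))) x)‖ := by
        have h4 := key1 (2 ^ n) x
        rwa [show 2 * 2 ^ n = 2 ^ (n+1) by ring] at h4
      have hexp : (2 ^ n - 1) * 2 + 1 = 2 ^ (n+1) - 1 := by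
        have h5 : 1 ≤ 2 ^ n := Nat.one_le_two_pow
        have h6 : 2 ^ (n+1) = 2 * 2 ^ n := by ring
        omega
      calc ‖B (R x)‖ ^ (2 ^ (n+1)) ≤ (‖B x‖ ^ (2 ^ n - 1)) ^ 2 * ‖B ((R ^ (2 ^ n)) x)‖ ^ 2 := by
            rw [h1]; rw [mul_pow] at h2; exact h2
        _ ≤ (‖B x‖ ^ (2 ^ n - 1)) ^ 2 * (‖B x‖ * ‖B ((R ^ (2 ^ (n+1))) x)‖) :=
            mul_le_mul_of_nonneg_left h3 (by positivity)
        _ = ‖B x‖ ^ ((2 ^ n - 1) * 2 + 1) * ‖B ((R ^ (2 ^ (n+1))) x)‖ := by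
            rw [← pow_mul, pow_succ]
            ring
        _ = ‖B x‖ ^ (2 ^ (n+1) - 1) * ‖B ((R ^ (2 ^ (n+1))) x)‖ := by rw [hexp]
  have hRbound : ∀ x, ‖B (R x)‖ ≤ ‖R‖ * ‖B x‖ := by
    intro x
    by_cases h0 : ‖B x‖ = 0
    · have h1 := key1 1 x
      rw [pow_one, h0] at h1
      have h2 : ‖B ((R ^ 1) x)‖ ^ 2 ≤ 0 := by simpa using h1
      have h3 : ‖B (R x)‖ = 0 := by
        have h4 : ‖B ((R ^ 1) x)‖ = ‖B (R x)‖ := by rw [pow_one]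
        nlinarith [norm_nonneg (B (R x))]
      rw [h0, h3, mul_zero]
    · have ha : 0 < ‖B x‖ := lt_of_le_of_ne (norm_nonneg _) (Ne.symm h0)
      by_contra hlt
      push_neg at hlt
      have hRpos : 0 < ‖R‖ := by
        rcases eq_or_lt_of_le (norm_nonneg R) with h | h
        · exfalso
          have hR0 : R = 0 := norm_eq_zero.mp h.symm
          rw [hR0] at hlt
          simp only [ContinuousLinearMap.zero_apply, map_zero, norm_zero] at hlt
          exact absurd hlt (not_lt.mpr (by positivity))
        · exact h
      set a := ‖B x‖
      set c := ‖B (R x)‖ / (‖R‖ * a) with hc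
      have hc1 : 1 < c := (one_lt_div (by positivity)).2 hlt
      obtain ⟨n, hn⟩ := pow_unbounded_of_one_lt (‖B‖ * ‖x‖ / a) hc1
      have hle : c ^ n ≤ c ^ (2 ^ n) := pow_le_pow_right₀ hc1.le (Nat.lt_two_pow_self (n := n)).le
      have hup : ‖B (R x)‖ ^ (2 ^ n) ≤ a ^ (2 ^ n - 1) * (‖B‖ * (‖R‖ ^ (2 ^ n) * ‖x‖)) := by
        refine (keyn n x).trans ?_
        refine mul_le_mul_of_nonneg_left ?_ (by positivity)
        calc ‖B ((R ^ (2 ^ n)) x)‖ ≤ ‖B‖ * ‖(R ^ (2 ^ n)) x‖ := B.le_opNorm _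
          _ ≤ ‖B‖ * (‖R‖ ^ (2 ^ n) * ‖x‖) := by
              refine mul_le_mul_of_nonneg_left ?_ (norm_nonneg B)
              calc ‖(R ^ (2 ^ n)) x‖ ≤ ‖R ^ (2 ^ n)‖ * ‖x‖ := (R ^ (2 ^ n)).le_opNorm x
                _ ≤ ‖R‖ ^ (2 ^ n) * ‖x‖ :=
                    mul_le_mul_of_nonneg_right (norm_pow_le' R (by positivity)) (norm_nonneg x)
      have hKey : c ^ (2 ^ n) ≤ ‖B‖ * ‖x‖ / a := by
        rw [hc, div_pow]
        rw [div_le_div_iff₀ (by positivity) ha]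
        have hae : a ^ (2 ^ n - 1) * a = a ^ (2 ^ n) := by
          rw [← pow_succ]
          congr 1
          have h5 : 1 ≤ 2 ^ n := Nat.one_le_two_pow
          omega
        calc ‖B (R x)‖ ^ (2 ^ n) * a ≤ (a ^ (2 ^ n - 1) * (‖B‖ * (‖R‖ ^ (2 ^ n) * ‖x‖))) * a :=
              mul_le_mul_of_nonneg_right hup ha.le
          _ = ‖B‖ * ‖x‖ * (‖R‖ * a) ^ (2 ^ n) := by
              rw [mul_pow, ← hae]; ring
      exact absurd (hn.trans_le (hle.trans hKey)) (lt_irrefl _)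
  refine ⟨Real.sqrt ‖R‖, Real.sqrt_nonneg _, fun x => ?_⟩
  have h1 : ‖B (T x)‖ ^ 2 ≤ ‖R‖ * ‖B x‖ ^ 2 := by
    have e1 : sip A (T x) (T x) = sip A x (R x) := by rw [hadj]; rfl
    calc ‖B (T x)‖ ^ 2 = (sip A (T x) (T x)).re := normBsq A B hBB hsym _
      _ ≤ ‖sip A (T x) (T x)‖ := Complex.re_le_norm _
      _ = ‖sip A x (R x)‖ := by rw [e1]
      _ ≤ ‖B x‖ * ‖B (R x)‖ := sip_cs A B hBB hsym _ _
      _ ≤ ‖B x‖ * (‖R‖ * ‖B x‖) := mul_le_mul_of_nonneg_left (hRbound x) (norm_nonneg _)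
      _ = ‖R‖ * ‖B x‖ ^ 2 := by ring
  have h2 : ‖B (T x)‖ = Real.sqrt (‖B (T x)‖ ^ 2) := (Real.sqrt_sq (norm_nonneg _)).symm
  rw [h2]
  calc Real.sqrt (‖B (T x)‖ ^ 2) ≤ Real.sqrt (‖R‖ * ‖B x‖ ^ 2) := Real.sqrt_le_sqrt h1
    _ = Real.sqrt ‖R‖ * ‖B x‖ := by
        rw [Real.sqrt_mul (norm_nonneg R), Real.sqrt_sq (norm_nonneg _)]

end aux2

section aux3

set_option linter.unusedSectionVars false

variable (A B : H →L[ℂ] H)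

lemma sip_smul_left (c : ℂ) (x y : H) : sip A (c • x) y = c * sip A x y := by
  simp [sip, inner_smul_right]

lemma sip_smul_right (c : ℂ) (x y : H) : sip A x (c • y) = conj c * sip A x y := by
  simp [sip, inner_smul_left, mul_comm]

lemma sip_add_right (x y z : H) : sip A x (y + z) = sip A x y + sip A x z := by
  simp [sip, inner_add_left]

lemma normalizeB (v : H) (hv : B v ≠ 0) : ‖B (((‖B v‖ : ℝ) : ℂ)⁻¹ • v)‖ = 1 := by
  have h0 : ‖B v‖ ≠ 0 := norm_ne_zero_iff.mpr hv
  rw [map_smul, norm_smul]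
  rw [norm_inv, Complex.norm_real, Real.norm_eq_abs, abs_of_nonneg (norm_nonneg _)]
  field_simp

lemma exists_unitB (hBB : ∀ x, B (B x) = A x)
    (hrank : 2 ≤ Module.rank ℂ (LinearMap.range (A : H →ₗ[ℂ] H))) :
    ∃ e : H, ‖B e‖ = 1 := by
  have hv : ∃ v, B v ≠ 0 := by
    by_contra h
    push_neg at h
    have hA : ∀ v, A v = 0 := by
      intro v
      rw [← hBB, h (B v)]
    have hbot : LinearMap.range (A : H →ₗ[ℂ] H) = ⊥ := by
      rw [LinearMap.range_eq_bot]
      ext v; exact hA v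
    rw [hbot] at hrank
    simp [rank_bot] at hrank
  obtain ⟨v, hv⟩ := hv
  exact ⟨_, normalizeB B v hv⟩

lemma exists_orthoB (hBB : ∀ x, B (B x) = A x)
    (hrank : 2 ≤ Module.rank ℂ (LinearMap.range (A : H →ₗ[ℂ] H)))
    (e : H) (he : ‖B e‖ = 1) :
    ∃ f : H, ‖B f‖ = 1 ∧ ⟪B f, B e⟫_ℂ = 0 := by
  have hBe : ⟪B e, B e⟫_ℂ = 1 := by
    rw [inner_self_eq_norm_sq_to_K (𝕜 := ℂ), he]
    norm_num
  have hz : ∃ z : H, B (z - ⟪B e, B z⟫_ℂ • e) ≠ 0 := by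
    by_contra h
    push_neg at h
    have hA : ∀ z, A z = ⟪B e, B z⟫_ℂ • A e := by
      intro z
      have h1 : ∀ c : ℂ, B z = c • B e → A z = c • A e := by
        intro c h1
        rw [← hBB z, h1, map_smul, hBB e]
      refine h1 _ ?_
      have h2 := h z
      rwa [map_sub, map_smul, sub_eq_zero] at h2
    have hle : LinearMap.range (A : H →ₗ[ℂ] H) ≤ Submodule.span ℂ {A e} := by
      rintro _ ⟨z, rfl⟩
      show A z ∈ _
      rw [hA z]
      exact Submodule.smul_mem _ _ (Submodule.mem_span_singleton_self _)
    have h1 := Submodule.rank_mono hle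
    have h2 : Module.rank ℂ (Submodule.span ℂ ({A e} : Set H)) ≤ 1 := by
      have := rank_span_le (R := ℂ) ({A e} : Set H)
      simpa using this
    have h3 := hrank.trans (h1.trans h2)
    exact absurd h3 (by norm_num)
  obtain ⟨z, hz⟩ := hz
  set g := z - ⟪B e, B z⟫_ℂ • e with hg
  refine ⟨((‖B g‖ : ℝ) : ℂ)⁻¹ • g, normalizeB B g hz, ?_⟩
  have hBg : ⟪B g, B e⟫_ℂ = 0 := by
    rw [hg, map_sub, map_smul, inner_sub_left, inner_smul_left, hBe, mul_one,
      ← inner_conj_symm (B z) (B e)]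
    simp
  rw [map_smul, inner_smul_left, hBg, mul_zero]

end aux3

section aux4

set_option linter.unusedSectionVars false

variable (A B : H →L[ℂ] H)

lemma polarize (T : H →L[ℂ] H) (u v : H) :
    (4:ℂ) * sip A (T u) v =
      sip A (T (u+v)) (u+v) - sip A (T (u-v)) (u-v)
      + Complex.I * sip A (T (u + Complex.I • v)) (u + Complex.I • v)
      - Complex.I * sip A (T (u - Complex.I • v)) (u - Complex.I • v) := by
  simp only [sip, map_add, map_sub, map_smul, inner_add_left, inner_add_right,
    inner_sub_left, inner_sub_right, inner_smul_left, inner_smul_right, Complex.conj_I]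
  ring_nf
  simp [Complex.I_sq]
  ring

lemma abs4 (a b c d : ℂ) :
    ‖a - b + Complex.I * c - Complex.I * d‖
      ≤ ‖a‖ + ‖b‖ + ‖c‖ + ‖d‖ := by
  have t1 : ‖a - b + Complex.I * c - Complex.I * d‖
      ≤ ‖a - b + Complex.I * c‖ + ‖Complex.I * d‖ := norm_sub_le _ _
  have t2 : ‖a - b + Complex.I * c‖ ≤ ‖a - b‖ + ‖Complex.I * c‖ := norm_add_le _ _
  have t3 : ‖a - b‖ ≤ ‖a‖ + ‖b‖ := norm_sub_le _ _
  have t4 : ‖Complex.I * c‖ = ‖c‖ := by rw [norm_mul, Complex.norm_I, one_mul]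
  have t5 : ‖Complex.I * d‖ = ‖d‖ := by rw [norm_mul, Complex.norm_I, one_mul]
  linarith

lemma polar_bound (hBB : ∀ x, B (B x) = A x) (hsym : ∀ x y, ⟪B x, y⟫_ℂ = ⟪x, B y⟫_ℂ)
    (T : H →L[ℂ] H) (C : ℝ) (hC : ∀ z, ‖B (T z)‖ ≤ C * ‖B z‖)
    (m : ℝ) (hm : 0 ≤ m) (hunit : ∀ e, ‖B e‖ = 1 → ‖sip A (T e) e‖ ≤ m)
    (u v : H) : ‖sip A (T u) v‖ ≤ 2 * m * (‖B u‖ * ‖B v‖) := by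
  -- diagonal bound for all vectors
  have hz : ∀ z, ‖sip A (T z) z‖ ≤ m * ‖B z‖ ^ 2 := by
    intro z
    by_cases h0 : ‖B z‖ = 0
    · have h1 : ‖sip A (T z) z‖ ≤ ‖B (T z)‖ * ‖B z‖ := sip_cs A B hBB hsym _ _
      rw [h0, mul_zero] at h1
      rw [h0]
      simpa using h1
    · have hz' : ‖B ((((‖B z‖ : ℝ) : ℂ))⁻¹ • z)‖ = 1 := normalizeB B z (norm_ne_zero_iff.mp h0)
      have hr : 0 < ‖B z‖ := lt_of_le_of_ne (norm_nonneg _) (Ne.symm h0)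
      set r := ‖B z‖
      set c : ℂ := ((r : ℝ) : ℂ)⁻¹ with hcdef
      have he : sip A (T (c • z)) (c • z) = c * (conj c * sip A (T z) z) := by
        rw [map_smul, sip_smul_left, sip_smul_right]
      have habs : ‖sip A (T (c • z)) (c • z)‖
          = r⁻¹ * (r⁻¹ * ‖sip A (T z) z‖) := by
        rw [he, norm_mul, norm_mul, Complex.norm_conj]
        have hac : ‖c‖ = r⁻¹ := by
          rw [hcdef, norm_inv, Complex.norm_real, Real.norm_eq_abs, abs_of_pos hr]
        rw [hac]
      have h2 := hunit _ hz'
      rw [habs] at h2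
      calc ‖sip A (T z) z‖
          = r ^ 2 * (r⁻¹ * (r⁻¹ * ‖sip A (T z) z‖)) := by
            field_simp
        _ ≤ r ^ 2 * m := mul_le_mul_of_nonneg_left h2 (by positivity)
        _ = m * r ^ 2 := by ring
  -- bound via polarization
  have huv : ∀ u v : H, ‖sip A (T u) v‖ ≤ m * (‖B u‖ ^ 2 + ‖B v‖ ^ 2) := by
    intro u v
    have hp := polarize A T u v
    have h4 : (4:ℝ) * ‖sip A (T u) v‖
        ≤ m * (‖B (u+v)‖ ^ 2 + ‖B (u-v)‖ ^ 2 + ‖B (u + Complex.I • v)‖ ^ 2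
            + ‖B (u - Complex.I • v)‖ ^ 2) := by
      have h5 : (4:ℝ) * ‖sip A (T u) v‖ = ‖(4:ℂ) * sip A (T u) v‖ := by
        rw [norm_mul]
        norm_num
      rw [h5, hp]
      calc ‖sip A (T (u+v)) (u+v) - sip A (T (u-v)) (u-v)
            + Complex.I * sip A (T (u + Complex.I • v)) (u + Complex.I • v)
            - Complex.I * sip A (T (u - Complex.I • v)) (u - Complex.I • v)‖
          ≤ ‖sip A (T (u+v)) (u+v)‖ + ‖sip A (T (u-v)) (u-v)‖
            + ‖sip A (T (u + Complex.I • v)) (u + Complex.I • v)‖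
            + ‖sip A (T (u - Complex.I • v)) (u - Complex.I • v)‖ := abs4 _ _ _ _
        _ ≤ m * ‖B (u+v)‖ ^ 2 + m * ‖B (u-v)‖ ^ 2 + m * ‖B (u + Complex.I • v)‖ ^ 2
            + m * ‖B (u - Complex.I • v)‖ ^ 2 := by
            gcongr <;> exact hz _
        _ = m * (‖B (u+v)‖ ^ 2 + ‖B (u-v)‖ ^ 2 + ‖B (u + Complex.I • v)‖ ^ 2
            + ‖B (u - Complex.I • v)‖ ^ 2) := by ring
    have hpar1 : ‖B (u+v)‖ ^ 2 + ‖B (u-v)‖ ^ 2 = 2 * (‖B u‖ ^ 2 + ‖B v‖ ^ 2) := by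
      have h6 := parallelogram_law_with_norm ℂ (B u) (B v)
      have h8 : B (u + v) = B u + B v := map_add _ _ _
      have h9 : B (u - v) = B u - B v := map_sub _ _ _
      rw [h8, h9]
      simp only [pow_two]
      linarith
    have hpar2 : ‖B (u + Complex.I • v)‖ ^ 2 + ‖B (u - Complex.I • v)‖ ^ 2
        = 2 * (‖B u‖ ^ 2 + ‖B v‖ ^ 2) := by
      have h6 := parallelogram_law_with_norm ℂ (B u) (Complex.I • B v)
      have h7 : ‖Complex.I • B v‖ = ‖B v‖ := by
        rw [norm_smul, Complex.norm_I, one_mul]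
      have h8 : B (u + Complex.I • v) = B u + Complex.I • B v := by
        rw [map_add, map_smul]
      have h9 : B (u - Complex.I • v) = B u - Complex.I • B v := by
        rw [map_sub, map_smul]
      rw [h8, h9]
      rw [h7] at h6
      simp only [pow_two]
      linarith
    nlinarith [h4, hpar1, hpar2]
  -- now scale
  by_cases hu0 : ‖B u‖ = 0
  · have h1 : ‖sip A (T u) v‖ ≤ ‖B (T u)‖ * ‖B v‖ := sip_cs A B hBB hsym _ _
    have h2 : ‖B (T u)‖ ≤ C * ‖B u‖ := hC u
    rw [hu0, mul_zero] at h2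
    rw [hu0]
    have h3 : ‖B (T u)‖ = 0 := le_antisymm h2 (norm_nonneg _)
    rw [h3, zero_mul] at h1
    simpa using h1
  by_cases hv0 : ‖B v‖ = 0
  · have h1 : ‖sip A (T u) v‖ ≤ ‖B (T u)‖ * ‖B v‖ := sip_cs A B hBB hsym _ _
    rw [hv0, mul_zero] at h1
    rw [hv0]
    simpa using h1
  have hu1 : ‖B ((((‖B u‖ : ℝ) : ℂ))⁻¹ • u)‖ = 1 := normalizeB B u (norm_ne_zero_iff.mp hu0)
  have hv1 : ‖B ((((‖B v‖ : ℝ) : ℂ))⁻¹ • v)‖ = 1 := normalizeB B v (norm_ne_zero_iff.mp hv0)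
  have hru : 0 < ‖B u‖ := lt_of_le_of_ne (norm_nonneg _) (Ne.symm hu0)
  have hrv : 0 < ‖B v‖ := lt_of_le_of_ne (norm_nonneg _) (Ne.symm hv0)
  set ru := ‖B u‖
  set rv := ‖B v‖
  set cu : ℂ := ((ru : ℝ) : ℂ)⁻¹ with hcu
  set cv : ℂ := ((rv : ℝ) : ℂ)⁻¹ with hcv
  have he : sip A (T (cu • u)) (cv • v) = cu * (conj cv * sip A (T u) v) := by
    rw [map_smul, sip_smul_left, sip_smul_right]
  have habs : ‖sip A (T (cu • u)) (cv • v)‖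
      = ru⁻¹ * (rv⁻¹ * ‖sip A (T u) v‖) := by
    rw [he, norm_mul, norm_mul, Complex.norm_conj]
    have e1 : ‖cu‖ = ru⁻¹ := by
      rw [hcu, norm_inv, Complex.norm_real, Real.norm_eq_abs, abs_of_pos hru]
    have e2 : ‖cv‖ = rv⁻¹ := by
      rw [hcv, norm_inv, Complex.norm_real, Real.norm_eq_abs, abs_of_pos hrv]
    rw [e1, e2]
  have h2 := huv (cu • u) (cv • v)
  rw [habs, hu1, hv1] at h2
  have hone : (1:ℝ)^2 + 1^2 = 2 := by norm_num
  rw [hone] at h2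
  have h3 : ‖sip A (T u) v‖
      = (ru * rv) * (ru⁻¹ * (rv⁻¹ * ‖sip A (T u) v‖)) := by
    field_simp
  calc ‖sip A (T u) v‖
      = (ru * rv) * (ru⁻¹ * (rv⁻¹ * ‖sip A (T u) v‖)) := h3
    _ ≤ (ru * rv) * (m * 2) := mul_le_mul_of_nonneg_left h2 (by positivity)
    _ = 2 * m * (ru * rv) := by ring

end aux4

section aux5

set_option linter.unusedSectionVars false

variable (A B : H →L[ℂ] H)

lemma pairy (hBB : ∀ x, B (B x) = A x) (hsym : ∀ x y, ⟪B x, y⟫_ℂ = ⟪x, B y⟫_ℂ)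
    (q : ℂ) (hq : ‖q‖ ≤ 1) (e f : H) (he : ‖B e‖ = 1) (hf1 : ‖B f‖ = 1)
    (hf2 : ⟪B f, B e⟫_ℂ = 0) (θ : ℂ) (hθ : ‖θ‖ = 1) :
    normA A e = 1 ∧
    normA A (conj q • e + (((Real.sqrt (1 - ‖q‖ ^ 2) : ℝ) : ℂ) * θ) • f) = 1 ∧
    sip A e (conj q • e + (((Real.sqrt (1 - ‖q‖ ^ 2) : ℝ) : ℂ) * θ) • f) = q ∧
    ∀ x : H, sip A x (conj q • e + (((Real.sqrt (1 - ‖q‖ ^ 2) : ℝ) : ℂ) * θ) • f)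
      = q * sip A x e + (((Real.sqrt (1 - ‖q‖ ^ 2) : ℝ) : ℂ) * conj θ) * sip A x f := by
  set s : ℝ := Real.sqrt (1 - ‖q‖ ^ 2) with hsdef
  have hq2 : ‖q‖ ^ 2 ≤ 1 := by nlinarith [norm_nonneg q]
  have hs0 : 0 ≤ s := Real.sqrt_nonneg _
  have hs2 : s ^ 2 = 1 - ‖q‖ ^ 2 := Real.sq_sqrt (by linarith)
  have hBe1 : ⟪B e, B e⟫_ℂ = 1 := by
    rw [inner_self_eq_norm_sq_to_K (𝕜 := ℂ), he]; norm_num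
  have hef : ⟪B e, B f⟫_ℂ = 0 := by
    rw [← inner_conj_symm, hf2, map_zero]
  set y := conj q • e + (((s : ℝ) : ℂ) * θ) • f with hy
  have hform : ∀ x : H, sip A x y
      = q * sip A x e + (((s : ℝ) : ℂ) * conj θ) * sip A x f := by
    intro x
    rw [hy, sip_add_right, sip_smul_right, sip_smul_right]
    have h1 : conj (conj q) = q := by simp
    have h2 : conj (((s : ℝ) : ℂ) * θ) = ((s : ℝ) : ℂ) * conj θ := by
      rw [map_mul, Complex.conj_ofReal]
    rw [h1, h2]
  have hBy : ‖B y‖ = 1 := by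
    have h8 : B y = conj q • B e + (((s : ℝ) : ℂ) * θ) • B f := by
      rw [hy, map_add, map_smul, map_smul]
    have hortho : ⟪conj q • B e, (((s : ℝ) : ℂ) * θ) • B f⟫_ℂ = 0 := by
      rw [inner_smul_left, inner_smul_right, hef]; ring
    have hn2 : ‖B y‖ ^ 2 = ‖conj q • B e‖ ^ 2 + ‖(((s : ℝ) : ℂ) * θ) • B f‖ ^ 2 := by
      rw [h8, norm_add_sq (𝕜 := ℂ), hortho]; simp
    have hn3 : ‖conj q • B e‖ = ‖q‖ := by
      rw [norm_smul, he, mul_one, Complex.norm_conj]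
    have hn4 : ‖(((s : ℝ) : ℂ) * θ) • B f‖ = s := by
      rw [norm_smul, hf1, mul_one, norm_mul, hθ, Complex.norm_real, Real.norm_eq_abs,
        abs_of_nonneg hs0, mul_one]
    have hsq : ‖B y‖ ^ 2 = 1 := by
      rw [hn2, hn3, hn4]; linarith
    rw [← Real.sqrt_sq (norm_nonneg (B y)), hsq, Real.sqrt_one]
  refine ⟨by rw [normAB A B hBB hsym]; exact he, by rw [normAB A B hBB hsym]; exact hBy, ?_, hform⟩
  rw [hform e]
  have h10 : sip A e e = 1 := by rw [sipB A B hBB hsym, hBe1]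
  have h11 : sip A e f = 0 := by rw [sipB A B hBB hsym, hf2]
  rw [h10, h11]
  ring

lemma exists_pair (hBB : ∀ x, B (B x) = A x) (hsym : ∀ x y, ⟪B x, y⟫_ℂ = ⟪x, B y⟫_ℂ)
    (hrank : 2 ≤ Module.rank ℂ (LinearMap.range (A : H →ₗ[ℂ] H)))
    (q : ℂ) (hq : ‖q‖ ≤ 1) :
    ∃ x y : H, normA A x = 1 ∧ normA A y = 1 ∧ sip A x y = q := by
  obtain ⟨e, he⟩ := exists_unitB A B hBB hrank
  obtain ⟨f, hf1, hf2⟩ := exists_orthoB A B hBB hrank e he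
  obtain ⟨h1, h2, h3, _⟩ := pairy A B hBB hsym q hq e f he hf1 hf2 1 (by simp)
  exact ⟨e, _, h1, h2, h3⟩

lemma lower (hBB : ∀ x, B (B x) = A x) (hsym : ∀ x y, ⟪B x, y⟫_ℂ = ⟪x, B y⟫_ℂ)
    (hrank : 2 ≤ Module.rank ℂ (LinearMap.range (A : H →ₗ[ℂ] H)))
    (T : H →L[ℂ] H) (q : ℂ) (hq : ‖q‖ ≤ 1)
    (hbdd : BddAbove {r : ℝ | ∃ x y : H, normA A x = 1 ∧ normA A y = 1 ∧ sip A x y = q ∧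
      r = ‖sip A (T x) y‖})
    (hw0 : 0 ≤ wqA A T q)
    (e : H) (he : ‖B e‖ = 1) :
    ‖q‖ * ‖sip A (T e) e‖ ≤ wqA A T q := by
  obtain ⟨f, hf1, hf2⟩ := exists_orthoB A B hBB hrank e he
  set s : ℝ := Real.sqrt (1 - ‖q‖ ^ 2) with hsdef
  have hs0 : 0 ≤ s := Real.sqrt_nonneg _
  have hmem : ∀ θ : ℂ, ‖θ‖ = 1 →
      ‖q * sip A (T e) e + (((s : ℝ) : ℂ) * conj θ) * sip A (T e) f‖
        ≤ wqA A T q := by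
    intro θ hθ
    obtain ⟨h1, h2, h3, h4⟩ := pairy A B hBB hsym q hq e f he hf1 hf2 θ hθ
    have hmemb : ‖sip A (T e)
        (conj q • e + (((s : ℝ) : ℂ) * θ) • f)‖ ∈ {r : ℝ | ∃ x y : H,
        normA A x = 1 ∧ normA A y = 1 ∧ sip A x y = q ∧
        r = ‖sip A (T x) y‖} :=
      ⟨e, _, h1, h2, h3, rfl⟩
    have h5 := le_csSup hbdd hmemb
    rw [h4 (T e)] at h5
    exact h5
  set α := q * sip A (T e) e with hαdef
  have habsα : ‖q‖ * ‖sip A (T e) e‖ = ‖α‖ := by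
    rw [hαdef, norm_mul]
  rw [habsα]
  by_cases hα0 : α = 0
  · rw [hα0, norm_zero]; exact hw0
  set β := sip A (T e) f with hβdef
  by_cases hβ0 : β = 0
  · have h1 := hmem 1 (by simp)
    rw [hβ0, mul_zero, add_zero] at h1
    exact h1
  · set θ : ℂ := conj ((α / ((‖α‖ : ℝ) : ℂ)) * (((‖β‖ : ℝ) : ℂ) / β))
      with hθdef
    have hcα : ((‖α‖ : ℝ) : ℂ) ≠ 0 := by
      simp only [ne_eq, Complex.ofReal_eq_zero]
      exact fun h => hα0 (norm_eq_zero.mp h)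
    have hcβ : ((‖β‖ : ℝ) : ℂ) ≠ 0 := by
      simp only [ne_eq, Complex.ofReal_eq_zero]
      exact fun h => hβ0 (norm_eq_zero.mp h)
    have hθ1 : ‖θ‖ = 1 := by
      rw [hθdef, Complex.norm_conj, norm_mul, norm_div, norm_div, Complex.norm_real,
        Complex.norm_real, Real.norm_eq_abs, Real.norm_eq_abs, abs_of_nonneg (norm_nonneg α),
        abs_of_nonneg (norm_nonneg β)]
      rw [div_self (norm_ne_zero_iff.mpr hα0), div_self (norm_ne_zero_iff.mpr hβ0), mul_one]
    have hconjθ : conj θ = (α / ((‖α‖ : ℝ) : ℂ)) * (((‖β‖ : ℝ) : ℂ) / β) := by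
      rw [hθdef, Complex.conj_conj]
    set t : ℝ := s * ‖β‖ / ‖α‖ with htdef
    have ht0 : 0 ≤ t := by
      apply div_nonneg (mul_nonneg hs0 (norm_nonneg β)) (norm_nonneg α)
    have heq : α + ((s : ℝ) : ℂ) * conj θ * β = α * (1 + ((t : ℝ) : ℂ)) := by
      rw [hconjθ, htdef]
      push_cast
      field_simp
    have habs2 : ‖α * (1 + ((t : ℝ) : ℂ))‖ = ‖α‖ * (1 + t) := by
      rw [norm_mul]
      congr 1
      have hcast : (1 : ℂ) + ((t : ℝ) : ℂ) = (((1 + t : ℝ)) : ℂ) := by push_cast; ring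
      rw [hcast, Complex.norm_real, Real.norm_eq_abs, abs_of_nonneg (by linarith)]
    have h1 := hmem θ hθ1
    rw [heq, habs2] at h1
    calc ‖α‖ = ‖α‖ * 1 := (mul_one _).symm
      _ ≤ ‖α‖ * (1 + t) :=
          mul_le_mul_of_nonneg_left (by linarith) (norm_nonneg α)
      _ ≤ _ := h1

end aux5

set_option synthInstance.maxHeartbeats 1000000 in
set_option maxHeartbeats 2000000 in
theorem stmt7 (A T S : H →L[ℂ] H) (hA : A.IsPositive)
    (hrank : 2 ≤ Module.rank ℂ (LinearMap.range (A : H →ₗ[ℂ] H)))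
    (hadjT : ∃ W : H →L[ℂ] H, ∀ x y : H, sip A (T x) y = sip A x (W y))
    (hadjS : ∃ W : H →L[ℂ] H, ∀ x y : H, sip A (S x) y = sip A x (W y))
    (q : ℂ) (hq0 : q ≠ 0) (hq : ‖q‖ ≤ 1) :
    ‖q‖ ^ 2 * wqA A (T ∘L S) q ≤ 4 * wqA A T q * wqA A S q := by
  have h0A : (0 : H →L[ℂ] H) ≤ A := (ContinuousLinearMap.nonneg_iff_isPositive A).2 hA
  set B := CFC.sqrt A with hBdef
  have hBmul : B * B = A := CFC.sqrt_mul_sqrt_self A h0A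
  have hBB : ∀ x, B (B x) = A x := fun x => by
    rw [← ContinuousLinearMap.mul_apply, hBmul]
  have hBpos : (0 : H →L[ℂ] H) ≤ B := CFC.sqrt_nonneg A
  have hBsa : IsSelfAdjoint B :=
    ((ContinuousLinearMap.nonneg_iff_isPositive B).1 hBpos).isSelfAdjoint
  have hsym : ∀ x y, ⟪B x, y⟫_ℂ = ⟪x, B y⟫_ℂ := fun x y => hBsa.isSymmetric x y
  obtain ⟨WT, hWT⟩ := hadjT
  obtain ⟨WS, hWS⟩ := hadjS
  have hadjTS : ∀ x y : H, sip A ((T ∘L S) x) y = sip A x ((WS ∘L WT) y) := by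
    intro x y
    have h1 : (T ∘L S) x = T (S x) := rfl
    rw [h1, hWT, hWS]; rfl
  obtain ⟨CT, hCT0, hCT⟩ := opbound A B hBB hsym T WT hWT
  obtain ⟨CS, hCS0, hCS⟩ := opbound A B hBB hsym S WS hWS
  obtain ⟨CTS, hCTS0, hCTS⟩ := opbound A B hBB hsym (T ∘L S) (WS ∘L WT) hadjTS
  have haq0 : 0 < ‖q‖ := norm_pos_iff.mpr hq0
  have hbdd : ∀ (U : H →L[ℂ] H) (CU : ℝ), (∀ x, ‖B (U x)‖ ≤ CU * ‖B x‖) →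
      BddAbove {r : ℝ | ∃ x y : H, normA A x = 1 ∧ normA A y = 1 ∧ sip A x y = q ∧
        r = ‖sip A (U x) y‖} := by
    intro U CU hCU
    refine ⟨CU, fun r hr => ?_⟩
    obtain ⟨x, y, hx, hy, hxy, hreq⟩ := hr
    rw [normAB A B hBB hsym] at hx hy
    rw [hreq]
    calc ‖sip A (U x) y‖ ≤ ‖B (U x)‖ * ‖B y‖ := sip_cs A B hBB hsym _ _
      _ ≤ (CU * ‖B x‖) * ‖B y‖ := mul_le_mul_of_nonneg_right (hCU x) (norm_nonneg _)
      _ = CU := by rw [hx, hy]; ring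
  have hbddT := hbdd T CT hCT
  have hbddS := hbdd S CS hCS
  have hbddTS := hbdd (T ∘L S) CTS hCTS
  have hw0 : ∀ U : H →L[ℂ] H,
      BddAbove {r : ℝ | ∃ x y : H, normA A x = 1 ∧ normA A y = 1 ∧ sip A x y = q ∧
        r = ‖sip A (U x) y‖} → 0 ≤ wqA A U q := by
    intro U hb
    obtain ⟨x, y, hx, hy, hxy⟩ := exists_pair A B hBB hsym hrank q hq
    have h1 := le_csSup hb (Set.mem_setOf.mpr ⟨x, y, hx, hy, hxy, rfl⟩)
    exact (norm_nonneg _).trans h1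
  have hwT0 := hw0 T hbddT
  have hwS0 := hw0 S hbddS
  have hunitT : ∀ e, ‖B e‖ = 1 →
      ‖sip A (T e) e‖ ≤ wqA A T q / ‖q‖ := by
    intro e he
    rw [le_div_iff₀ haq0]
    calc ‖sip A (T e) e‖ * ‖q‖
        = ‖q‖ * ‖sip A (T e) e‖ := mul_comm _ _
      _ ≤ wqA A T q := lower A B hBB hsym hrank T q hq hbddT hwT0 e he
  have hunitS : ∀ e, ‖B e‖ = 1 →
      ‖sip A (S e) e‖ ≤ wqA A S q / ‖q‖ := by
    intro e he
    rw [le_div_iff₀ haq0]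
    calc ‖sip A (S e) e‖ * ‖q‖
        = ‖q‖ * ‖sip A (S e) e‖ := mul_comm _ _
      _ ≤ wqA A S q := lower A B hBB hsym hrank S q hq hbddS hwS0 e he
  set mT := wqA A T q / ‖q‖ with hmTdef
  set mS := wqA A S q / ‖q‖ with hmSdef
  have hmT0 : 0 ≤ mT := div_nonneg hwT0 haq0.le
  have hmS0 : 0 ≤ mS := div_nonneg hwS0 haq0.le
  have GT := polar_bound A B hBB hsym T CT hCT mT hmT0 hunitT
  have GS := polar_bound A B hBB hsym S CS hCS mS hmS0 hunitS
  have hSx : ∀ x, ‖B x‖ = 1 → ‖B (S x)‖ ≤ 2 * mS := by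
    intro x hx
    have h1 : ‖B (S x)‖ ^ 2 = (sip A (S x) (S x)).re := normBsq A B hBB hsym _
    have h2 : (sip A (S x) (S x)).re ≤ ‖sip A (S x) (S x)‖ := Complex.re_le_norm _
    have h3 := GS x (S x)
    rw [hx] at h3
    by_cases h0 : ‖B (S x)‖ = 0
    · rw [h0]; positivity
    · have hp : 0 < ‖B (S x)‖ := lt_of_le_of_ne (norm_nonneg _) (Ne.symm h0)
      nlinarith [h1, h2, h3]
  have hfin : wqA A (T ∘L S) q ≤ 4 * mT * mS := by
    unfold wqA
    apply Real.sSup_le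
    · rintro r ⟨x, y, hx, hy, hxy, hreq⟩
      rw [normAB A B hBB hsym] at hx hy
      rw [hreq]
      have hcomp : (T ∘L S) x = T (S x) := rfl
      rw [hcomp]
      calc ‖sip A (T (S x)) y‖ ≤ 2 * mT * (‖B (S x)‖ * ‖B y‖) := GT (S x) y
        _ = 2 * mT * ‖B (S x)‖ := by rw [hy, mul_one]
        _ ≤ 2 * mT * (2 * mS) := mul_le_mul_of_nonneg_left (hSx x hx) (by positivity)
        _ = 4 * mT * mS := by ring
    · positivity
  have hmain : ‖q‖ ^ 2 * wqA A (T ∘L S) q ≤ ‖q‖ ^ 2 * (4 * mT * mS) :=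
    mul_le_mul_of_nonneg_left hfin (by positivity)
  have hident : ‖q‖ ^ 2 * (4 * mT * mS) = 4 * wqA A T q * wqA A S q := by
    rw [hmTdef, hmSdef]
    field_simp
  linarith [hmain, hident]
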